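/- Let c ∈ [0,1) and a ∈ (0,1), and consider the discrete neuron model x_{n+1} = c·x_n + a·tanh(x_n − x_{n−1}). Every solution oscillates if and only if a > (1−√(1−c))². -/

import Mathlib

open Real
lemma hasDerivAt_tanh' (x : ℝ) : HasDerivAt Real.tanh (1 - Real.tanh x ^ 2) x := by
  have h : HasDerivAt (fun y => Real.sinh y / Real.cosh y)
      ((Real.cosh x * Real.cosh x - Real.sinh x * Real.sinh x) / Real.cosh x ^ 2) x :=
    (Real.hasDerivAt_sinh x).div (Real.hasDerivAt_cosh x) (Real.cosh_pos x).ne'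
  have e : (Real.cosh x * Real.cosh x - Real.sinh x * Real.sinh x) / Real.cosh x ^ 2
      = 1 - Real.tanh x ^ 2 := by
    rw [Real.tanh_eq_sinh_div_cosh]
    have hc := (Real.cosh_pos x).ne'
    have := Real.cosh_sq_sub_sinh_sq x
    field_simp
  rw [e] at h
  exact h.congr_of_eventuallyEq (by filter_upwards with y using (Real.tanh_eq_sinh_div_cosh y))

lemma tanh_nonneg' {t : ℝ} (ht : 0 ≤ t) : 0 ≤ Real.tanh t := by
  rw [Real.tanh_eq_sinh_div_cosh]
  exact div_nonneg (Real.sinh_nonneg_iff.2 ht) (Real.cosh_pos t).le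

lemma tanh_le_self' {t : ℝ} (ht : 0 ≤ t) : Real.tanh t ≤ t := by
  have hmono : MonotoneOn (fun s => s - Real.tanh s) (Set.Ici 0) := by
    apply monotoneOn_of_deriv_nonneg (convex_Ici 0)
    · exact (continuous_id.sub (Real.continuous_sinh.div Real.continuous_cosh
        fun y => (Real.cosh_pos y).ne')).continuousOn.congr
        fun y _ => by simp [Real.tanh_eq_sinh_div_cosh]
    · intro y hy
      exact ((hasDerivAt_id y).sub (hasDerivAt_tanh' y)).differentiableAt.differentiableWithinAt
    · intro y hy
      have hd : deriv (fun s => s - Real.tanh s) y = 1 - (1 - Real.tanh y ^ 2) :=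
        ((hasDerivAt_id y).sub (hasDerivAt_tanh' y)).deriv
      rw [hd]
      nlinarith [sq_nonneg (Real.tanh y)]
  have := hmono (Set.self_mem_Ici) (Set.mem_Ici.2 ht) ht
  simpa [Real.tanh_zero] using this

lemma tanh_lower' {t : ℝ} (ht : 0 ≤ t) : t - t ^ 3 / 3 ≤ Real.tanh t := by
  have hmono : MonotoneOn (fun s => Real.tanh s - (s - s ^ 3 / 3)) (Set.Ici 0) := by
    apply monotoneOn_of_deriv_nonneg (convex_Ici 0)
    · exact ((Real.continuous_sinh.div Real.continuous_cosh
        fun y => (Real.cosh_pos y).ne').sub (continuous_id.sub ((continuous_pow 3).div_const 3))).continuousOn.congr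
        fun y _ => by simp [Real.tanh_eq_sinh_div_cosh]
    · intro y hy
      have : HasDerivAt (fun s : ℝ => s - s ^ 3 / 3) (1 - 3 * y ^ 2 / 3) y := by
        convert (show HasDerivAt (fun s : ℝ => s - s ^ 3 / 3) (1 - ((3:ℕ):ℝ) * y ^ (3 - 1) / 3) y from (hasDerivAt_id' y).sub ((hasDerivAt_pow 3 y).div_const 3)) using 1; norm_num
      exact ((hasDerivAt_tanh' y).sub this).differentiableAt.differentiableWithinAt
    · intro y hy
      rw [interior_Ici, Set.mem_Ioi] at hy
      have h2 : HasDerivAt (fun s : ℝ => s - s ^ 3 / 3) (1 - 3 * y ^ 2 / 3) y := by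
        convert (show HasDerivAt (fun s : ℝ => s - s ^ 3 / 3) (1 - ((3:ℕ):ℝ) * y ^ (3 - 1) / 3) y from (hasDerivAt_id' y).sub ((hasDerivAt_pow 3 y).div_const 3)) using 1; norm_num
      have hd : deriv (fun s => Real.tanh s - (s - s ^ 3 / 3) : ℝ → ℝ) y
          = (1 - Real.tanh y ^ 2) - (1 - 3 * y ^ 2 / 3) := ((hasDerivAt_tanh' y).sub h2).deriv
      rw [hd]
      have h3 := tanh_le_self' hy.le
      have h4 := tanh_nonneg' hy.le
      nlinarith
  have := hmono (Set.self_mem_Ici) (Set.mem_Ici.2 ht) ht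
  simp only [Real.tanh_zero] at this
  linarith [this]

lemma no_pos_sol' (p q : ℝ) (hq : 0 < q) (hpq : p ^ 2 < 4 * q) (y : ℕ → ℝ)
    (hpos : ∀ n, 0 < y n) (hrec : ∀ n, y (n + 2) ≤ p * y (n + 1) - q * y n) : False := by
  set δ := 2 * Real.sqrt q - p with hδdef
  have hsq : Real.sqrt q ^ 2 = q := Real.sq_sqrt hq.le
  have hsqpos : 0 < Real.sqrt q := Real.sqrt_pos.2 hq
  have hδ : 0 < δ := by nlinarith
  set r := fun n => y (n + 1) / y n with hr
  have hrpos : ∀ n, 0 < r n := fun n => div_pos (hpos _) (hpos _)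
  have hstep : ∀ n, r (n + 1) ≤ r n - δ := by
    intro n
    have h1 : y (n + 2) ≤ p * y (n + 1) - q * y n := hrec n
    have h2 : r (n + 1) ≤ p - q / r n := by
      rw [hr]
      rw [div_le_iff₀ (hpos (n + 1))]
      have : q / (y (n + 1) / y n) = q * y n / y (n + 1) := by
        field_simp
      rw [this, sub_mul, div_mul_cancel₀ _ (hpos (n + 1)).ne']
      linarith
    have h3 : p - q / r n ≤ r n - δ := by
      have h4 : 0 < r n := hrpos n
      rw [sub_le_sub_iff, hδdef]
      have : q / r n ≥ 2 * Real.sqrt q - r n := by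
        rw [ge_iff_le, sub_le_iff_le_add]
        have hq' : q / r n * r n = q := div_mul_cancel₀ _ h4.ne'
        nlinarith [sq_nonneg (r n - Real.sqrt q), mul_pos (div_pos hq h4) h4]
      linarith
    linarith
  have hiter : ∀ n, r n ≤ r 0 - n * δ := by
    intro n
    induction n with
    | zero => simp
    | succ k ih =>
      have := hstep k
      push_cast
      linarith
  obtain ⟨n, hn⟩ := exists_nat_gt (r 0 / δ)
  have h5 := hiter n
  have h6 : r 0 / δ * δ < n * δ := by exact (mul_lt_mul_iff_of_pos_right hδ).2 hn
  rw [div_mul_cancel₀ _ hδ.ne'] at h6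
  have := hrpos n
  linarith

lemma thr_iff' (c a : ℝ) (hc0 : 0 ≤ c) (hc1 : c < 1) (ha0 : 0 < a) (ha1 : a < 1) :
    (1 - Real.sqrt (1 - c)) ^ 2 < a ↔ (c + a) ^ 2 < 4 * a := by
  set s := Real.sqrt (1 - c) with hs
  set t := Real.sqrt a with ht
  have hs2 : s ^ 2 = 1 - c := Real.sq_sqrt (by linarith)
  have ht2 : t ^ 2 = a := Real.sq_sqrt ha0.le
  have hs0 : 0 < s := Real.sqrt_pos.2 (by linarith)
  have ht0 : 0 < t := Real.sqrt_pos.2 ha0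
  have hs1 : s ≤ 1 := by nlinarith
  have ht1 : t < 1 := by nlinarith
  constructor
  · intro h
    have h1 : 1 - s < t := by nlinarith
    have h2 : s ^ 2 > (1 - t) ^ 2 := by nlinarith
    nlinarith
  · intro h
    have h1 : c + a < 2 * t := by nlinarith
    have h2 : (1 - t) ^ 2 < s ^ 2 := by nlinarith
    have h3 : 1 - t < s := by nlinarith
    nlinarith

lemma tanh_nonpos' {t : ℝ} (ht : t ≤ 0) : Real.tanh t ≤ 0 := by
  have := tanh_nonneg' (neg_nonneg.2 ht)
  rw [Real.tanh_neg] at this; linarith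

lemma self_le_tanh' {t : ℝ} (ht : t ≤ 0) : t ≤ Real.tanh t := by
  have := tanh_le_self' (neg_nonneg.2 ht)
  rw [Real.tanh_neg] at this; linarith

set_option maxHeartbeats 1600000 in
lemma not_ev_pos' (c a : ℝ) (hc0 : 0 ≤ c) (hc1 : c < 1) (ha0 : 0 < a) (ha1 : a < 1)
    (hlt : (c + a) ^ 2 < 4 * a) (x : ℕ → ℝ)
    (hx : ∀ n : ℕ, 1 ≤ n → x (n + 1) = c * x n + a * Real.tanh (x n - x (n - 1)))
    (N : ℕ) (hN : ∀ n, N ≤ n → 0 < x n) : False := by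
  have hx' : ∀ k : ℕ, x (k + 2) = c * x (k + 1) + a * Real.tanh (x (k + 1) - x k) := by
    intro k
    have := hx (k + 1) (by omega)
    simpa using this
  by_cases hB : ∀ k, N ≤ k → x k < x (k + 1)
  · -- eventually increasing
    apply no_pos_sol' (c + a) a ha0 (by linarith) (fun n => x (N + n))
      (fun n => hN _ (Nat.le_add_right N n))
    intro n
    show x (N + n + 2) ≤ (c + a) * x (N + n + 1) - a * x (N + n)
    have h1 := hx' (N + n)
    have h2 : 0 ≤ x (N + n + 1) - x (N + n) :=
      sub_nonneg.2 (hB (N + n) (Nat.le_add_right N n)).le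
    have h3 := tanh_le_self' h2
    nlinarith [mul_le_mul_of_nonneg_left h3 ha0.le]
  · push_neg at hB
    obtain ⟨m, hm1, hm2⟩ := hB
    have hstep : ∀ j : ℕ, x (m + j + 1) ≤ x (m + j) := by
      intro j
      induction j with
      | zero => exact hm2
      | succ k ih =>
        have h1 := hx' (m + k)
        have h2 : x (m + k + 1) - x (m + k) ≤ 0 := by linarith
        have h3 := tanh_nonpos' h2
        have h4 : 0 < x (m + k + 1) := hN _ (by omega)
        show x (m + k + 2) ≤ x (m + k + 1)
        nlinarith [mul_nonpos_of_nonneg_of_nonpos ha0.le h3]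
    have hstep' : ∀ k, m ≤ k → x (k + 1) ≤ x k := by
      intro k hk
      obtain ⟨j, rfl⟩ := Nat.exists_eq_add_of_le hk
      exact hstep j
    have hgeo : ∀ k, m + 1 ≤ k → x (k + 1) ≤ c * x k := by
      intro k hk
      obtain ⟨l, rfl⟩ : ∃ l, k = l + 1 := ⟨k - 1, by omega⟩
      have h1 := hx' l
      have h2 : x (l + 1) - x l ≤ 0 := sub_nonpos.2 (hstep' l (by omega))
      have h3 := tanh_nonpos' h2
      nlinarith [mul_nonpos_of_nonneg_of_nonpos ha0.le h3]
    rcases eq_or_lt_of_le hc0 with hcz | hcpos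
    · -- c = 0 : immediate contradiction
      have h1 := hgeo (m + 1) le_rfl
      rw [← hcz] at h1
      have h2 := hN (m + 1 + 1) (by omega)
      simp at h1
      linarith
    obtain ⟨ε, hε0, hε1, hε2⟩ : ∃ ε : ℝ, 0 < ε ∧ ε ≤ 1 / 2 ∧
        ε * (2 * (4 * a + a ^ 2)) ≤ 4 * a - (c + a) ^ 2 := by
      have hden : 0 < 2 * (4 * a + a ^ 2) := by nlinarith
      have hf1pos : 0 < 4 * a - (c + a) ^ 2 := by linarith
      refine ⟨min (1 / 2) ((4 * a - (c + a) ^ 2) / (2 * (4 * a + a ^ 2))),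
        lt_min (by norm_num) (div_pos hf1pos hden), min_le_left _ _, ?_⟩
      calc min (1 / 2) ((4 * a - (c + a) ^ 2) / (2 * (4 * a + a ^ 2))) * (2 * (4 * a + a ^ 2))
          ≤ (4 * a - (c + a) ^ 2) / (2 * (4 * a + a ^ 2)) * (2 * (4 * a + a ^ 2)) :=
            mul_le_mul_of_nonneg_right (min_le_right _ _) hden.le
        _ = 4 * a - (c + a) ^ 2 := div_mul_cancel₀ _ hden.ne'
    obtain ⟨θ, hθ1, hθhalf, hθε⟩ : ∃ θ : ℝ, θ < 1 ∧ 1 / 2 ≤ θ ∧ θ = 1 - ε :=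
      ⟨1 - ε, by linarith, by linarith, rfl⟩
    have haθ : 0 < a * θ := by nlinarith
    have hdisc : (c + a * θ) ^ 2 < 4 * (a * θ) := by
      rw [hθε]
      rw [hθε] at hθhalf
      nlinarith [mul_nonneg (mul_nonneg hc0 ha0.le) hε0.le,
        mul_nonneg (mul_nonneg ha0.le ha0.le) hε0.le,
        mul_nonneg hε0.le hε0.le]
    obtain ⟨η, hη0, hη2⟩ : ∃ η : ℝ, 0 < η ∧ η ^ 2 = 3 * (1 - θ) :=
      ⟨Real.sqrt (3 * (1 - θ)), Real.sqrt_pos.2 (by linarith),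
        Real.sq_sqrt (by linarith)⟩
    have htθ : ∀ u : ℝ, -η ≤ u → u ≤ 0 → Real.tanh u ≤ θ * u := by
      intro u h1 h2
      have h3 : 0 ≤ -u := by linarith
      have h4 : -u ≤ η := by linarith
      have h5 := tanh_lower' h3
      have h6 : Real.tanh (-u) = -Real.tanh u := Real.tanh_neg u
      have h7 : (-u) ^ 2 ≤ 3 * (1 - θ) := by nlinarith
      have h8 : 0 ≤ (-u) * (3 * (1 - θ) - (-u) ^ 2) := mul_nonneg h3 (by linarith)
      nlinarith
    have hpow : ∀ j : ℕ, x (m + 1 + j) ≤ c ^ j * x (m + 1) := by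
      intro j
      induction j with
      | zero => simp
      | succ k ih =>
        have h1 : x (m + 1 + k + 1) ≤ c * x (m + 1 + k) := hgeo (m + 1 + k) (by omega)
        calc x (m + 1 + (k + 1)) = x (m + 1 + k + 1) := rfl
          _ ≤ c * x (m + 1 + k) := h1
          _ ≤ c * (c ^ k * x (m + 1)) := mul_le_mul_of_nonneg_left ih hc0
          _ = c ^ (k + 1) * x (m + 1) := by ring
    have hxm1 : 0 < x (m + 1) := hN _ (by omega)
    obtain ⟨j₀, hj₀⟩ := exists_pow_lt_of_lt_one (div_pos hη0 hxm1) hc1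
    have hsmall0 : x (m + 1 + j₀) ≤ η := by
      have h1 := hpow j₀
      have h2 : c ^ j₀ * x (m + 1) < η / x (m + 1) * x (m + 1) :=
        (mul_lt_mul_iff_of_pos_right hxm1).2 hj₀
      rw [div_mul_cancel₀ _ hxm1.ne'] at h2
      linarith
    have hmono : ∀ j k : ℕ, m ≤ j → j ≤ k → x k ≤ x j := by
      intro j k hj hk
      induction k, hk using Nat.le_induction with
      | base => exact le_refl _
      | succ k hk ih => exact le_trans (hstep' k (by omega)) ih
    have hsmall : ∀ k, m + 1 + j₀ ≤ k → x k ≤ η := fun k hk =>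
      le_trans (hmono (m + 1 + j₀) k (by omega) hk) hsmall0
    apply no_pos_sol' (c + a * θ) (a * θ) haθ hdisc (fun n => x (m + 1 + j₀ + n))
      (fun n => hN _ (by omega))
    intro n
    show x (m + 1 + j₀ + n + 2)
        ≤ (c + a * θ) * x (m + 1 + j₀ + n + 1) - a * θ * x (m + 1 + j₀ + n)
    have h1 := hx' (m + 1 + j₀ + n)
    have h2 : x (m + 1 + j₀ + n + 1) - x (m + 1 + j₀ + n) ≤ 0 :=
      sub_nonpos.2 (hstep' (m + 1 + j₀ + n) (by omega))
    have h3 : -η ≤ x (m + 1 + j₀ + n + 1) - x (m + 1 + j₀ + n) := by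
      have h4 : x (m + 1 + j₀ + n) ≤ η := hsmall (m + 1 + j₀ + n) (by omega)
      have h5 : 0 < x (m + 1 + j₀ + n + 1) := hN _ (by omega)
      linarith
    have h6 := htθ _ h3 h2
    nlinarith [mul_le_mul_of_nonneg_left h6 ha0.le]

noncomputable def seq17 (c a l : ℝ) : ℕ → ℝ
  | 0 => 1
  | 1 => l
  | n + 2 => c * seq17 c a l (n + 1) + a * Real.tanh (seq17 c a l (n + 1) - seq17 c a l n)

lemma seq17_pos (c a : ℝ) (hc0 : 0 ≤ c) (hc1 : c < 1) (ha0 : 0 < a) (ha1 : a < 1)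
    (hge : 4 * a ≤ (c + a) ^ 2) :
    ∃ x : ℕ → ℝ,
      (∀ n : ℕ, 1 ≤ n → x (n + 1) = c * x n + a * Real.tanh (x n - x (n - 1))) ∧
      ∀ n, 0 < x n := by
  have hD : 0 ≤ (c + a) ^ 2 - 4 * a := by linarith
  set l := ((c + a) - Real.sqrt ((c + a) ^ 2 - 4 * a)) / 2 with hl
  have hs2 : Real.sqrt ((c + a) ^ 2 - 4 * a) ^ 2 = (c + a) ^ 2 - 4 * a := Real.sq_sqrt hD
  have hs0 : 0 ≤ Real.sqrt ((c + a) ^ 2 - 4 * a) := Real.sqrt_nonneg _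
  have hca : 0 < c + a := by linarith
  have hslt : Real.sqrt ((c + a) ^ 2 - 4 * a) < c + a := by
    nlinarith
  have hl0 : 0 < l := by rw [hl]; linarith
  have hl1 : l ≤ 1 := by
    rw [hl]
    have : (c + a) / 2 < 1 := by linarith
    linarith
  have hleq : l ^ 2 - (c + a) * l + a = 0 := by
    rw [hl]; linear_combination (1/4) * hs2
  have hcal : 0 ≤ c + a - l := by rw [hl]; linarith
  refine ⟨seq17 c a l, ?_, ?_⟩
  · intro n hn
    obtain ⟨k, rfl⟩ : ∃ k, n = k + 1 := ⟨n - 1, by omega⟩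
    show seq17 c a l (k + 2) = _
    rw [seq17]
    norm_num
  · have key : ∀ n, 0 < seq17 c a l (n + 1) ∧ seq17 c a l (n + 1) ≤ seq17 c a l n ∧
        l * seq17 c a l n ≤ seq17 c a l (n + 1) := by
      intro n
      induction n with
      | zero =>
        refine ⟨?_, ?_, ?_⟩ <;> simp [seq17] <;> linarith
      | succ k ih =>
        obtain ⟨h1, h2, h3⟩ := ih
        have hrec : seq17 c a l (k + 2)
            = c * seq17 c a l (k + 1) + a * Real.tanh (seq17 c a l (k + 1) - seq17 c a l k) := by
          rw [seq17]
        have hΔ : seq17 c a l (k + 1) - seq17 c a l k ≤ 0 := by linarith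
        have ht1 := tanh_nonpos' hΔ
        have ht2 := self_le_tanh' hΔ
        have hlow : (c + a) * seq17 c a l (k + 1) - a * seq17 c a l k ≤ seq17 c a l (k + 2) := by
          rw [hrec]
          nlinarith [mul_le_mul_of_nonneg_left ht2 ha0.le]
        have hkey : l * seq17 c a l (k + 1)
            ≤ (c + a) * seq17 c a l (k + 1) - a * seq17 c a l k := by
          nlinarith [mul_le_mul_of_nonneg_left h3 hcal]
        refine ⟨by nlinarith, ?_, by linarith⟩
        rw [hrec]
        nlinarith [mul_nonpos_of_nonneg_of_nonpos ha0.le ht1]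
    intro n
    cases n with
    | zero => show (0:ℝ) < 1; norm_num
    | succ k => exact (key k).1

theorem stmt17 (c a : ℝ) (hc0 : 0 ≤ c) (hc1 : c < 1) (ha0 : 0 < a) (ha1 : a < 1) :
    (∀ x : ℕ → ℝ,
        (∀ n : ℕ, 1 ≤ n → x (n + 1) = c * x n + a * Real.tanh (x n - x (n - 1))) →
        ¬ (∃ N : ℕ, ∀ n : ℕ, N ≤ n → 0 < x n) ∧
        ¬ (∃ N : ℕ, ∀ n : ℕ, N ≤ n → x n < 0)) ↔
      (1 - Real.sqrt (1 - c)) ^ 2 < a := by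
  constructor
  · intro H
    by_contra hna
    push_neg at hna
    have hge : 4 * a ≤ (c + a) ^ 2 := by
      by_contra h
      push_neg at h
      exact absurd ((thr_iff' c a hc0 hc1 ha0 ha1).mpr h) (not_lt.2 hna)
    obtain ⟨x, hrec, hpos⟩ := seq17_pos c a hc0 hc1 ha0 ha1 hge
    exact (H x hrec).1 ⟨0, fun n _ => hpos n⟩
  · intro h x hxrec
    have hd : (c + a) ^ 2 < 4 * a := (thr_iff' c a hc0 hc1 ha0 ha1).mp h
    constructor
    · rintro ⟨N, hN⟩
      exact not_ev_pos' c a hc0 hc1 ha0 ha1 hd x hxrec N hN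
    · rintro ⟨N, hN⟩
      apply not_ev_pos' c a hc0 hc1 ha0 ha1 hd (fun n => -x n) ?_ N
        (fun n hn => by simpa using neg_pos.2 (hN n hn))
      intro n hn
      show -x (n + 1) = c * (-x n) + a * Real.tanh (-x n - -x (n - 1))
      have e : -x n - -x (n - 1) = -(x n - x (n - 1)) := by ring
      rw [e, Real.tanh_neg, hxrec n hn]
      ring
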